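/- Let A be an n×n Hermitian matrix with an equitable partition whose normalized characteristic matrix is S. If V_i = {u} and V_j = {v} are singleton cells, then ⟨e_{V_j}, exp(-iBt)·e_{V_i}⟩ = ⟨e_v, exp(-iAt)·e_u⟩ for all real t, where B = SᵀAS is the quotient matrix. -/

import Mathlib

set_option maxHeartbeats 1000000


open Matrix Finset

/-- If `X * S = S * Y` then the exponentials intertwine through `S`. -/
lemma exp_intertwine {n m : ℕ} (X : Matrix (Fin n) (Fin n) ℂ) (Y : Matrix (Fin m) (Fin m) ℂ)
    (S : Matrix (Fin n) (Fin m) ℂ) (h : X * S = S * Y) :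
    NormedSpace.exp X * S = S * NormedSpace.exp Y := by
  letI : SeminormedRing (Matrix (Fin n) (Fin n) ℂ) := Matrix.linftyOpSemiNormedRing
  letI : NormedRing (Matrix (Fin n) (Fin n) ℂ) := Matrix.linftyOpNormedRing
  letI : NormedAlgebra ℂ (Matrix (Fin n) (Fin n) ℂ) := Matrix.linftyOpNormedAlgebra
  letI : SeminormedRing (Matrix (Fin m) (Fin m) ℂ) := Matrix.linftyOpSemiNormedRing
  letI : NormedRing (Matrix (Fin m) (Fin m) ℂ) := Matrix.linftyOpNormedRing
  letI : NormedAlgebra ℂ (Matrix (Fin m) (Fin m) ℂ) := Matrix.linftyOpNormedAlgebra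
  have hpow : ∀ k : ℕ, X ^ k * S = S * Y ^ k := by
    intro k
    induction k with
    | zero => simp
    | succ k ih =>
      rw [pow_succ, pow_succ, Matrix.mul_assoc, h, ← Matrix.mul_assoc, ih, Matrix.mul_assoc]
  have hX : Summable fun k : ℕ => ((k.factorial : ℂ))⁻¹ • X ^ k :=
    NormedSpace.expSeries_summable' X
  have hY : Summable fun k : ℕ => ((k.factorial : ℂ))⁻¹ • Y ^ k :=
    NormedSpace.expSeries_summable' Y
  let R : Matrix (Fin n) (Fin n) ℂ →L[ℂ] Matrix (Fin n) (Fin m) ℂ :=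
    { toLinearMap :=
        { toFun := fun M => M * S
          map_add' := fun a b => Matrix.add_mul a b S
          map_smul' := fun c a => Matrix.smul_mul c a S }
      cont := Continuous.matrix_mul continuous_id continuous_const }
  let L : Matrix (Fin m) (Fin m) ℂ →L[ℂ] Matrix (Fin n) (Fin m) ℂ :=
    { toLinearMap :=
        { toFun := fun M => S * M
          map_add' := fun a b => Matrix.mul_add S a b
          map_smul' := fun c a => Matrix.mul_smul S c a }
      cont := Continuous.matrix_mul continuous_const continuous_id }
  have h1 : NormedSpace.exp X * S = R (NormedSpace.exp X) := rfl
  have h2 : S * NormedSpace.exp Y = L (NormedSpace.exp Y) := rfl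
  rw [h1, h2, NormedSpace.exp_eq_tsum (𝕂 := ℂ), NormedSpace.exp_eq_tsum (𝕂 := ℂ), R.map_tsum hX, L.map_tsum hY]
  congr 1
  funext k
  show ((k.factorial : ℂ))⁻¹ • X ^ k * S = S * ((k.factorial : ℂ))⁻¹ • Y ^ k
  rw [Matrix.smul_mul, Matrix.mul_smul, hpow]

/-- for an equitable partition of a Hermitian matrix `A` with singleton cells
`V_i = {u}` and `V_j = {v}`, the walk on the quotient `B = SᵀAS` satisfies
`⟨e_{V_j}, exp(-iBt)·e_{V_i}⟩ = ⟨e_v, exp(-iAt)·e_u⟩`. -/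
theorem stmt8 {n m : ℕ} (A : Matrix (Fin n) (Fin n) ℂ) (hA : A.IsHermitian)
    (f : Fin n → Fin m) (hf : Function.Surjective f)
    (S : Matrix (Fin n) (Fin m) ℂ)
    (hS : ∀ j k, S j k =
      if f j = k then ((1 / Real.sqrt ((univ.filter fun x => f x = k).card) : ℝ) : ℂ) else 0)
    (r c : Fin m → Fin m → ℂ)
    (hr : ∀ j k, ∀ x : Fin n, f x = j → ∑ y ∈ univ.filter (fun y => f y = k), A x y = r j k)
    (hc : ∀ j k, ∀ y : Fin n, f y = k → ∑ x ∈ univ.filter (fun x => f x = j), A x y = c j k)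
    (u v : Fin n)
    (hu : ∀ x, f x = f u → x = u) (hv : ∀ x, f x = f v → x = v)
    (t : ℝ) :
    (NormedSpace.exp ((-(Complex.I * (t : ℂ))) • (S.transpose * A * S))) (f v) (f u) =
      (NormedSpace.exp ((-(Complex.I * (t : ℂ))) • A)) v u := by
  classical
  set N : Fin m → ℕ := fun k => (univ.filter fun x => f x = k).card with hN
  have hNpos : ∀ k, 0 < N k := by
    intro k
    obtain ⟨x, hx⟩ := hf k
    exact card_pos.2 ⟨x, by simp [hx]⟩
  set s : Fin m → ℝ := fun k => Real.sqrt (N k) with hs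
  have hspos : ∀ k, 0 < s k := fun k => Real.sqrt_pos.2 (by exact_mod_cast hNpos k)
  have hssq : ∀ k, s k * s k = (N k : ℝ) := fun k => Real.mul_self_sqrt (by positivity)
  -- S entries
  have hSe : ∀ x k, S x k = if f x = k then ((1 / s k : ℝ) : ℂ) else 0 := hS
  -- Step 1 : A * S = S * (Sᵀ * A * S)
  have key : A * S = S * (S.transpose * A * S) := by
    ext x k
    have hAS : (A * S) x k = ((1 / s k : ℝ) : ℂ) * r (f x) k := by
      rw [mul_apply]
      calc ∑ y, A x y * S y k
          = ∑ y ∈ univ.filter (fun y => f y = k), A x y * ((1 / s k : ℝ) : ℂ) := by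
            rw [Finset.sum_filter]
            refine Finset.sum_congr rfl fun y _ => ?_
            rw [hSe]
            by_cases h : f y = k <;> simp [h]
        _ = ((1 / s k : ℝ) : ℂ) * r (f x) k := by
            rw [← Finset.sum_mul, hr (f x) k x rfl, mul_comm]
    have hB : ∀ j, (S.transpose * A * S) j k = ((s j / s k : ℝ) : ℂ) * r j k := by
      intro j
      have hTA : ∀ b, (S.transpose * A) j b =
          ((1 / s j : ℝ) : ℂ) * ∑ a ∈ univ.filter (fun a => f a = j), A a b := by
        intro b
        rw [mul_apply]
        rw [Finset.sum_filter, Finset.mul_sum]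
        refine Finset.sum_congr rfl fun a _ => ?_
        rw [transpose_apply, hSe]
        by_cases h : f a = j <;> simp [h, mul_comm]
      rw [mul_apply]
      calc ∑ b, (S.transpose * A) j b * S b k
          = ∑ b ∈ univ.filter (fun b => f b = k),
              (((1 / s j : ℝ) : ℂ) * ∑ a ∈ univ.filter (fun a => f a = j), A a b) *
                ((1 / s k : ℝ) : ℂ) := by
            rw [Finset.sum_filter]
            refine Finset.sum_congr rfl fun b _ => ?_
            rw [hTA, hSe]
            by_cases h : f b = k <;> simp [h]
        _ = ((1 / s j : ℝ) : ℂ) * ((1 / s k : ℝ) : ℂ) *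
              ∑ b ∈ univ.filter (fun b => f b = k),
                ∑ a ∈ univ.filter (fun a => f a = j), A a b := by
            rw [Finset.mul_sum]
            refine Finset.sum_congr rfl fun b _ => by ring
        _ = ((1 / s j : ℝ) : ℂ) * ((1 / s k : ℝ) : ℂ) * ((N j : ℂ) * r j k) := by
            congr 1
            rw [Finset.sum_comm]
            calc ∑ a ∈ univ.filter (fun a => f a = j),
                  ∑ b ∈ univ.filter (fun b => f b = k), A a b
                = ∑ a ∈ univ.filter (fun a => f a = j), r j k :=
                  Finset.sum_congr rfl fun a ha => hr j k a (by simpa using ha)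
              _ = (N j : ℂ) * r j k := by rw [Finset.sum_const, hN]; simp [nsmul_eq_mul]
        _ = ((s j / s k : ℝ) : ℂ) * r j k := by
            have : ((1 / s j : ℝ) : ℂ) * ((1 / s k : ℝ) : ℂ) * (N j : ℂ) =
                ((s j / s k : ℝ) : ℂ) := by
              have h1 : ((N j : ℝ) : ℂ) = (N j : ℂ) := by push_cast; ring
              rw [← h1, ← Complex.ofReal_mul, ← Complex.ofReal_mul]
              congr 1
              rw [← hssq j]
              field_simp
            rw [← this]; ring
    have hSB : (S * (S.transpose * A * S)) x k = ((1 / s k : ℝ) : ℂ) * r (f x) k := by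
      rw [mul_apply]
      calc ∑ j, S x j * (S.transpose * A * S) j k
          = S x (f x) * (S.transpose * A * S) (f x) k := by
            refine Finset.sum_eq_single (f x) (fun j _ hj => ?_) (by simp)
            rw [hSe]; simp [Ne.symm hj]
        _ = ((1 / s (f x) : ℝ) : ℂ) * (((s (f x) / s k : ℝ) : ℂ) * r (f x) k) := by
            rw [hSe, hB]; simp
        _ = ((1 / s k : ℝ) : ℂ) * r (f x) k := by
            rw [← mul_assoc, ← Complex.ofReal_mul]
            congr 2
            field_simp
            rw [div_mul_cancel_left₀ (ne_of_gt (hspos (f x))), one_div]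
    rw [hAS, hSB]
  -- scaled version
  have keyc : ((-(Complex.I * (t : ℂ))) • A) * S =
      S * ((-(Complex.I * (t : ℂ))) • (S.transpose * A * S)) := by
    rw [Matrix.smul_mul, Matrix.mul_smul, key]
  -- intertwine exponentials
  have hexp := exp_intertwine _ _ S keyc
  -- singleton cell values of S
  have hNu : N (f u) = 1 := by
    have h1 : (univ.filter fun x => f x = f u) = {u} := by
      ext x; simp only [mem_filter, mem_univ, true_and, mem_singleton]
      exact ⟨hu x, fun h => h ▸ rfl⟩
    show (univ.filter fun x => f x = f u).card = 1
    rw [h1, card_singleton]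
  have hNv : N (f v) = 1 := by
    have h1 : (univ.filter fun x => f x = f v) = {v} := by
      ext x; simp only [mem_filter, mem_univ, true_and, mem_singleton]
      exact ⟨hv x, fun h => h ▸ rfl⟩
    show (univ.filter fun x => f x = f v).card = 1
    rw [h1, card_singleton]
  have hsu1 : ((1 / s (f u) : ℝ) : ℂ) = 1 := by
    have : s (f u) = 1 := by rw [hs]; simp [hNu]
    rw [this]; norm_num
  have hsv1 : ((1 / s (f v) : ℝ) : ℂ) = 1 := by
    have : s (f v) = 1 := by rw [hs]; simp [hNv]
    rw [this]; norm_num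
  have hSu : ∀ x, S x (f u) = if x = u then 1 else 0 := by
    intro x
    rw [hSe]
    by_cases h : f x = f u
    · have hx : x = u := hu x h
      rw [if_pos h, if_pos hx, hsu1]
    · have hx : x ≠ u := fun hxu => h (hxu ▸ rfl)
      simp [h, hx]
  have hSv : ∀ x, S x (f v) = if x = v then 1 else 0 := by
    intro x
    rw [hSe]
    by_cases h : f x = f v
    · have hx : x = v := hv x h
      rw [if_pos h, if_pos hx, hsv1]
    · have hx : x ≠ v := fun hxv => h (hxv ▸ rfl)
      simp [h, hx]
  -- Sᵀ S = 1
  have hStS : S.transpose * S = 1 := by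
    ext j k
    rw [mul_apply]
    by_cases hjk : j = k
    · subst hjk
      have : ∀ x : Fin n, S.transpose j x * S x j =
          if f x = j then ((1 / s j : ℝ) : ℂ) * ((1 / s j : ℝ) : ℂ) else 0 := by
        intro x
        rw [transpose_apply, hSe]
        split_ifs with h
        · rfl
        · rw [mul_zero]
      rw [Finset.sum_congr rfl fun x _ => this x, ← Finset.sum_filter]
      have hcard : (univ.filter fun x => f x = j).card = N j := rfl
      rw [Finset.sum_const, hcard]
      have hmul : ((1 / s j : ℝ) : ℂ) * ((1 / s j : ℝ) : ℂ) = ((1 / (N j) : ℝ) : ℂ) := by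
        rw [← Complex.ofReal_mul]
        congr 1
        rw [← hssq j, div_mul_div_comm, one_mul]
      rw [hmul, Matrix.one_apply_eq, nsmul_eq_mul]
      have hNj : ((N j : ℂ)) ≠ 0 := by exact_mod_cast (hNpos j).ne'
      have hcast : ((1 / (N j : ℝ) : ℝ) : ℂ) = ((N j : ℂ))⁻¹ := by
        push_cast
        rw [one_div]
      rw [hcast]
      exact mul_inv_cancel₀ hNj
    · have : ∀ x : Fin n, S.transpose j x * S x k = 0 := by
        intro x
        rw [transpose_apply, hSe, hSe]
        by_cases h1 : f x = j
        · have h2 : f x ≠ k := fun h => hjk (h1 ▸ h)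
          simp [h2]
        · simp [h1]
      rw [Finset.sum_congr rfl fun x _ => this x]
      simp [Matrix.one_apply_ne hjk]
  -- conclude: exp(cB) = Sᵀ exp(cA) S
  have hmain : NormedSpace.exp ((-(Complex.I * (t : ℂ))) • (S.transpose * A * S)) =
      S.transpose * NormedSpace.exp ((-(Complex.I * (t : ℂ))) • A) * S := by
    conv_rhs => rw [Matrix.mul_assoc, hexp, ← Matrix.mul_assoc, hStS, Matrix.one_mul]
  rw [hmain]
  -- entrywise computation
  set E := NormedSpace.exp ((-(Complex.I * (t : ℂ))) • A) with hE
  rw [mul_apply]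
  have hrow : ∀ b, (S.transpose * E) (f v) b = E v b := by
    intro b
    rw [mul_apply]
    rw [Finset.sum_congr rfl fun x _ => by rw [transpose_apply, hSv x]]
    simp
  calc ∑ b, (S.transpose * E) (f v) b * S b (f u)
      = ∑ b, E v b * (if b = u then 1 else 0) := by
        refine Finset.sum_congr rfl fun b _ => by rw [hrow, hSu]
    _ = E v u := by simp
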